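/- Richardson's formula: for f_n(z) = Σ_{j=0}^n a_j z^{j+1} and k ≥ 0, μ_k(f_n) = Σ (s_0 + 1) a_{s_0} a_{s_1} ⋯ a_{s_k} · conj(a_{s_0 + s_1 + ⋯ + s_k + k}), where the sum runs over all multi-indices (s_0, …, s_k) with 0 ≤ s_j ≤ n (terms with s_0+⋯+s_k+k > n are zero since a_m := 0 for m > n). -/

import Mathlib

open Finset

/-- The polynomial `f_n(z) = Σ_{k=0}^n a_k z^{k+1}` as a formal Laurent series. -/
noncomputable def fL (n : ℕ) (a : ℕ → ℂ) : LaurentSeries ℂ :=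
  ∑ k ∈ Finset.range (n + 1), HahnSeries.single ((k : ℤ) + 1) (a k)

/-- `f_n^*(z) = Σ_{k=0}^n conj(a_k) z^{-k-1}` as a formal Laurent series. -/
noncomputable def fStar (n : ℕ) (a : ℕ → ℂ) : LaurentSeries ℂ :=
  ∑ k ∈ Finset.range (n + 1), HahnSeries.single (-(k : ℤ) - 1) ((starRingEnd ℂ) (a k))

/-- `f_n'(z) = Σ_{k=0}^n (k+1) a_k z^k` as a formal Laurent series. -/
noncomputable def fD (n : ℕ) (a : ℕ → ℂ) : LaurentSeries ℂ :=
  ∑ k ∈ Finset.range (n + 1), HahnSeries.single ((k : ℤ)) (((k : ℂ) + 1) * a k)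

/-- The `k`th moment `μ_k(f_n) = CT_z (z f_n^* f_n' f_n^k)`, the constant term of
the formal Laurent series `z f_n^*(z) f_n'(z) f_n(z)^k` (with `f_n^k` interpreted
in the field of formal Laurent series for negative `k`). -/
noncomputable def mu (n : ℕ) (a : ℕ → ℂ) (k : ℤ) : ℂ :=
  ((HahnSeries.single (1 : ℤ) (1 : ℂ)) * fStar n a * fD n a * (fL n a) ^ k).coeff 0

lemma coeff_sum' {α : Type*} (s : Finset α) (f : α → LaurentSeries ℂ) (g : ℤ) :
    (∑ i ∈ s, f i).coeff g = ∑ i ∈ s, (f i).coeff g := by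
  classical
  induction s using Finset.cons_induction with
  | empty => simp
  | cons a s h ih => rw [Finset.sum_cons, Finset.sum_cons, HahnSeries.coeff_add, ih]

lemma prod_single' {α : Type*} (s : Finset α) (g : α → ℤ) (c : α → ℂ) :
    (∏ i ∈ s, (HahnSeries.single (g i) (c i) : LaurentSeries ℂ))
      = HahnSeries.single (∑ i ∈ s, g i) (∏ i ∈ s, c i) := by
  classical
  induction s using Finset.cons_induction with
  | empty => simp [HahnSeries.single_zero_one]
  | cons a s h ih => rw [Finset.prod_cons, Finset.prod_cons, Finset.sum_cons, ih, HahnSeries.single_mul_single]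

lemma fin_sum_if (n N : ℕ) (c : ℕ → ℂ) :
    ∑ m : Fin (n+1), (if (m : ℕ) = N then c (m : ℕ) else 0) = if N ≤ n then c N else 0 := by
  by_cases h : N ≤ n
  · rw [if_pos h, Finset.sum_eq_single (⟨N, by omega⟩ : Fin (n+1))]
    · simp
    · intro b _ hb
      rw [if_neg]
      intro hbN
      exact hb (Fin.ext hbN)
    · simp
  · rw [if_neg h, Finset.sum_eq_zero]
    intro m _
    rw [if_neg]
    intro hm
    exact h (hm ▸ Nat.lt_succ_iff.mp m.isLt)

/-- Richardson's formula for the nonnegative moments: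
`μ_k(f_n) = Σ_{(s₀,…,s_k)} (s₀+1) a_{s₀} ⋯ a_{s_k} conj(a_{s₀+⋯+s_k+k})`,
the sum over all multi-indices with `0 ≤ s_j ≤ n`, where `a_m := 0` for `m > n`. -/
theorem richardson_formula (n : ℕ) (a : ℕ → ℂ) (ha : a 0 ≠ 0) (k : ℕ) :
    mu n a (k : ℤ) =
      ∑ s : Fin (k + 1) → Fin (n + 1),
        (((s 0 : ℕ) : ℂ) + 1) * (∏ j, a (s j)) *
          (starRingEnd ℂ)
            (if (∑ j, ((s j : ℕ))) + k ≤ n then a ((∑ j, ((s j : ℕ))) + k) else 0) := by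
  classical
  rw [mu, zpow_natCast]
  have hfL : fL n a = ∑ j : Fin (n+1), HahnSeries.single ((j:ℤ)+1) (a j) :=
    (Fin.sum_univ_eq_sum_range _ _).symm
  have hfS : fStar n a = ∑ j : Fin (n+1), HahnSeries.single (-(j:ℤ)-1) ((starRingEnd ℂ) (a j)) :=
    (Fin.sum_univ_eq_sum_range _ _).symm
  have hfD : fD n a = ∑ j : Fin (n+1), HahnSeries.single ((j:ℤ)) (((j:ℂ)+1) * a j) :=
    (Fin.sum_univ_eq_sum_range _ _).symm
  have hpow : (fL n a) ^ k = ∑ s : Fin k → Fin (n+1),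
      HahnSeries.single (∑ i, ((s i : ℤ)+1)) (∏ i, a (s i)) := by
    calc (fL n a) ^ k = ∏ _i : Fin k, fL n a := by simp
      _ = ∑ s ∈ Fintype.piFinset (fun _ : Fin k => (univ : Finset (Fin (n+1)))),
            ∏ i, HahnSeries.single (((s i : ℕ) : ℤ)+1) (a (s i)) := by
          rw [hfL]; exact Finset.prod_univ_sum _ _
      _ = _ := by
          rw [Fintype.piFinset_univ]
          exact Finset.sum_congr rfl fun s _ => prod_single' _ _ _
  rw [hfS, hfD, hpow]
  simp only [Finset.mul_sum, Finset.sum_mul, HahnSeries.single_mul_single, one_mul]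
  simp only [coeff_sum', HahnSeries.coeff_single]
  rw [← Equiv.sum_comp (Fin.consEquiv (fun _ : Fin (k+1) => Fin (n+1)))
    (fun s : Fin (k+1) → Fin (n+1) =>
      ((((s 0 : ℕ) : ℂ) + 1) * ∏ j, a (s j)) *
        (starRingEnd ℂ) (if (∑ j, ((s j : ℕ))) + k ≤ n then a ((∑ j, ((s j : ℕ))) + k) else 0)),
    Fintype.sum_prod_type]
  rw [Finset.sum_comm]
  refine Finset.sum_congr rfl fun x _ => ?_
  refine Finset.sum_congr rfl fun s _ => ?_
  conv_rhs => simp only [Fin.consEquiv_apply, Fin.cons_zero, Fin.sum_univ_succ,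
    Fin.prod_univ_succ, Fin.cons_succ]
  have h1 : ∀ m : Fin (n+1),
      ((0:ℤ) = 1 + (-(m:ℤ) - 1) + ((x:ℕ):ℤ) + ∑ i : Fin k, (((s i : ℕ):ℤ) + 1)) ↔
        ((m:ℕ) = (x:ℕ) + (∑ i : Fin k, (s i : ℕ)) + k) := by
    intro m
    have hcast : ∑ i : Fin k, (((s i : ℕ):ℤ) + 1) = ((∑ i : Fin k, (s i : ℕ) : ℕ) : ℤ) + k := by
      rw [Finset.sum_add_distrib]
      push_cast
      simp
    rw [hcast]
    omega
  simp only [h1]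
  rw [fin_sum_if n ((x:ℕ) + (∑ i : Fin k, (s i : ℕ)) + k)
      (fun N => (starRingEnd ℂ) (a N) * ((((x:ℕ):ℂ) + 1) * a (x:ℕ)) * ∏ i : Fin k, a (s i)),
    apply_ite (starRingEnd ℂ), map_zero]
  split_ifs with h
  · ring
  · simp
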